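/- Let x be the sequence x₀ = 1, x_k = 1 + 1/x_{k-1}, and u_k = x_{2k+1} − φ with φ = (1+√5)/2. Then the limit of (1+φ)^{2k} · u_k as k → ∞ exists and is a positive real number. -/

import Mathlib

theorem golden_odd_error_limit (x : ℕ → ℝ)
    (h0 : x 0 = 1) (hrec : ∀ k, x (k + 1) = 1 + 1 / x k)
    (φ : ℝ) (hφ : φ = (1 + Real.sqrt 5) / 2)
    (u : ℕ → ℝ) (hu : ∀ k, u k = x (2 * k + 1) - φ) :
    ∃ L : ℝ, 0 < L ∧
      Filter.Tendsto (fun k => (1 + φ) ^ (2 * k) * u k) Filter.atTop (nhds L) := by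
  obtain ⟨ψ, hψ⟩ : ∃ ψ : ℝ, ψ = (1 - Real.sqrt 5) / 2 := ⟨_, rfl⟩
  have h5 : Real.sqrt 5 ^ 2 = 5 := Real.sq_sqrt (by norm_num)
  have hs2 : (2:ℝ) < Real.sqrt 5 := by nlinarith [Real.sqrt_nonneg 5]
  have hs3 : Real.sqrt 5 < 3 := by nlinarith [Real.sqrt_nonneg 5]
  have hφ1 : 1 < φ := by rw [hφ]; linarith
  have hφ0 : φ ≠ 0 := by linarith
  have hψneg : -1 < ψ ∧ ψ < 0 := by constructor <;> (rw [hψ]; nlinarith)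
  have hψabs : |ψ| < 1 := abs_lt.2 ⟨hψneg.1, by linarith [hψneg.2]⟩
  have hprod : φ * ψ = -1 := by rw [hφ, hψ]; linear_combination (-1/4 : ℝ) * h5
  have hsum : φ + ψ = 1 := by rw [hφ, hψ]; ring
  have hdiff : φ - ψ = Real.sqrt 5 := by rw [hφ, hψ]; ring
  have hφ2 : φ ^ 2 = φ + 1 := by rw [hφ]; linear_combination (1/4 : ℝ) * h5
  have hψ2 : ψ ^ 2 = ψ + 1 := by rw [hψ]; linear_combination (1/4 : ℝ) * h5
  -- denominators positive
  have Dpos : ∀ n : ℕ, 0 < φ ^ (n+1) - ψ ^ (n+1) := by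
    intro n
    have h1 : ψ ^ (n+1) < 1 := by
      calc ψ ^ (n+1) ≤ |ψ ^ (n+1)| := le_abs_self _
        _ = |ψ| ^ (n+1) := abs_pow _ _
        _ < 1 := pow_lt_one₀ (abs_nonneg _) hψabs (Nat.succ_ne_zero n)
    have h2 : 1 < φ ^ (n+1) := one_lt_pow₀ hφ1 (Nat.succ_ne_zero n)
    linarith
  have hx : ∀ k : ℕ, x k = (φ ^ (k+2) - ψ ^ (k+2)) / (φ ^ (k+1) - ψ ^ (k+1)) := by
    intro k
    induction k with
    | zero =>
      rw [h0, eq_div_iff (ne_of_gt (Dpos 0))]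
      linear_combination (ψ - φ) * hsum
    | succ k ih =>
      rw [hrec k, ih, one_div_div]
      show 1 + (φ ^ (k+1) - ψ ^ (k+1)) / (φ ^ (k+2) - ψ ^ (k+2)) =
        (φ ^ (k+3) - ψ ^ (k+3)) / (φ ^ (k+2) - ψ ^ (k+2))
      have hA := ne_of_gt (Dpos (k+1))
      field_simp
      linear_combination (-1:ℝ)*φ^(k+1) * hφ2 + ψ^(k+1) * hψ2
  -- formula for u
  have huf : ∀ k : ℕ, u k = Real.sqrt 5 * ψ ^ (2*k+2) / (φ ^ (2*k+2) - ψ ^ (2*k+2)) := by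
    intro k
    rw [hu k, hx (2*k+1)]
    show (φ ^ (2*k+3) - ψ ^ (2*k+3)) / (φ ^ (2*k+2) - ψ ^ (2*k+2)) - φ =
      Real.sqrt 5 * ψ ^ (2*k+2) / (φ ^ (2*k+2) - ψ ^ (2*k+2))
    have hD : φ ^ (2*k+2) - ψ ^ (2*k+2) ≠ 0 := ne_of_gt (Dpos (2*k+1))
    field_simp
    linear_combination ψ^(2*k+2) * hdiff
  have hψne : ψ ≠ 0 := ne_of_lt hψneg.2
  have hr0 : 0 < ψ^4 := by positivity
  have hr1 : ψ^4 < 1 := by nlinarith [hψneg.1, hψneg.2, sq_nonneg ψ, sq_nonneg (ψ^2)]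
  have hφ4 : 1 < φ^4 := one_lt_pow₀ hφ1 (by norm_num)
  have hEpos : ∀ k : ℕ, 0 < φ^4 - (ψ^4)^k := by
    intro k
    have h2 : (ψ^4)^k ≤ 1 := pow_le_one₀ (le_of_lt hr0) (le_of_lt hr1)
    linarith
  have key2 : ∀ k : ℕ, φ^(2*k) * ψ^(2*k) = 1 := by
    intro k
    rw [← mul_pow, hprod, pow_mul]
    norm_num
  have haf : ∀ k : ℕ, (1+φ)^(2*k) * u k = Real.sqrt 5 / (φ^4 - (ψ^4)^k) := by
    intro k
    rw [huf k]
    have h1φ : (1:ℝ) + φ = φ^2 := by linarith [hφ2]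
    have hD : φ^(2*k+2) - ψ^(2*k+2) ≠ 0 := ne_of_gt (Dpos (2*k+1))
    have hE : φ^4 - (ψ^4)^k ≠ 0 := ne_of_gt (hEpos k)
    rw [h1φ]
    field_simp
    linear_combination ((φ^(2*k)*φ^4*ψ^2 - ψ^(2*k)*ψ^2*(φ^(2*k)*ψ^(2*k)+1))) * key2 k +
      (φ^(2*k) * φ^2 * (φ*ψ-1)) * hprod
  refine ⟨Real.sqrt 5 / (φ^4 - 0), ?_, ?_⟩
  · apply div_pos (by linarith) (by linarith)
  · have hL : Filter.Tendsto (fun k : ℕ => Real.sqrt 5 / (φ^4 - (ψ^4)^k))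
        Filter.atTop (nhds (Real.sqrt 5 / (φ^4 - 0))) := by
      apply Filter.Tendsto.div tendsto_const_nhds
      · exact tendsto_const_nhds.sub
          (tendsto_pow_atTop_nhds_zero_of_lt_one (le_of_lt hr0) hr1)
      · intro h; rw [sub_zero] at h; exact absurd h (by positivity)
    exact hL.congr (fun k => (haf k).symm)
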